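/- Let (Ω, ν) be a measure space, let ψ_1, …, ψ_N : Ω → ℝ be square-integrable functions satisfying the Kronecker property at points p_1, …, p_N ∈ Ω (i.e., ψ_i(p_i) = 1 and ψ_i(p_j) = 0 for i ≠ j), let M ∈ ℝ^{N×N} with M_{ij} = ∫_Ω ψ_i ψ_j dν be invertible, let P ∈ ℝ^{N×N}, and define Φ_h(y, x) = Σ_{k,l} P_{kl} ψ_k(y) ψ_l(x) and A_{ij} = ∫_Ω ∫_Ω ψ_i(y) Φ_h(y, x) ψ_j(x) dν(x) dν(y). Then the matrix of nodal kernel values satisfies Φ_h(p_i, p_j) = (M⁻¹ A M⁻¹)_{ij} for all i, j. -/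

import Mathlib

open MeasureTheory Matrix

/-- With basis functions satisfying the Kronecker property at nodes `p`, the
matrix of nodal kernel values satisfies `Φ_h(p_i, p_j) = (M⁻¹ A M⁻¹)_{ij}`. -/
theorem nodal_kernel_values_eq_inv_mass_A_inv_mass
    {Ω : Type*} [MeasurableSpace Ω] (ν : Measure Ω) {N : ℕ}
    (ψ : Fin N → Ω → ℝ) (hψ : ∀ i, MemLp (ψ i) 2 ν)
    (p : Fin N → Ω)
    (hKron : ∀ i j, ψ i (p j) = if i = j then 1 else 0)
    (M : Matrix (Fin N) (Fin N) ℝ)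
    (hM : ∀ i j, M i j = ∫ ω, ψ i ω * ψ j ω ∂ν)
    (hMinv : IsUnit M.det)
    (P : Matrix (Fin N) (Fin N) ℝ)
    (Φh : Ω → Ω → ℝ)
    (hΦh : ∀ y x, Φh y x = ∑ k, ∑ l, P k l * ψ k y * ψ l x)
    (A : Matrix (Fin N) (Fin N) ℝ)
    (hA : ∀ i j, A i j = ∫ y, ∫ x, ψ i y * Φh y x * ψ j x ∂ν ∂ν) :
    ∀ i j, Φh (p i) (p j) = (M⁻¹ * A * M⁻¹) i j := by
  -- integrability of products
  have integ : ∀ i j, Integrable (fun ω => ψ i ω * ψ j ω) ν := by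
    intro i j
    have h := (hψ j).smul (hψ i) (p := 2) (q := 2) (r := 1)
    rw [memLp_one_iff_integrable] at h
    simp only [smul_eq_mul] at h
    exact h
  have hMsymm : ∀ a b, M a b = M b a := fun a b => by
    rw [hM, hM]
    exact integral_congr_ae (Filter.Eventually.of_forall fun ω => mul_comm _ _)
  -- A = M * P * M
  have hAeq : A = M * P * M := by
    ext i j
    rw [hA]
    have hinner : ∀ y : Ω, (∫ x, ψ i y * Φh y x * ψ j x ∂ν)
        = ∑ k, ∑ l, (P k l * M l j) * (ψ k y * ψ i y) := by
      intro y
      have heq : (fun x => ψ i y * Φh y x * ψ j x)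
          = fun x => ∑ k, ∑ l, (P k l * ψ k y * ψ i y) * (ψ l x * ψ j x) := by
        funext x
        rw [hΦh, Finset.mul_sum, Finset.sum_mul]
        refine Finset.sum_congr rfl fun k _ => ?_
        rw [Finset.mul_sum, Finset.sum_mul]
        exact Finset.sum_congr rfl fun l _ => by ring
      rw [heq]
      rw [integral_finset_sum _ (fun k _ => integrable_finset_sum _
        (fun l _ => ((integ l j).const_mul _)))]
      refine Finset.sum_congr rfl fun k _ => ?_
      rw [integral_finset_sum _ (fun l _ => ((integ l j).const_mul _))]
      refine Finset.sum_congr rfl fun l _ => ?_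
      rw [integral_const_mul, show (∫ x, ψ l x * ψ j x ∂ν) = M l j from (hM l j).symm]
      ring
    rw [integral_congr_ae (Filter.Eventually.of_forall hinner)]
    rw [integral_finset_sum _ (fun k _ => integrable_finset_sum _
      (fun l _ => ((integ k i).const_mul _)))]
    have hMPM : (M * P * M) i j = ∑ k, ∑ l, M i k * P k l * M l j := by
      simp only [Matrix.mul_apply, Finset.sum_mul]
      rw [Finset.sum_comm]
    rw [hMPM]
    refine Finset.sum_congr rfl fun k _ => ?_
    rw [integral_finset_sum _ (fun l _ => ((integ k i).const_mul _))]
    refine Finset.sum_congr rfl fun l _ => ?_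
    rw [integral_const_mul, show (∫ x, ψ k x * ψ i x ∂ν) = M k i from (hM k i).symm,
      hMsymm k i]
    ring
  -- M⁻¹ * (M * P * M) * M⁻¹ = P
  have hPeq : M⁻¹ * A * M⁻¹ = P := by
    rw [hAeq, Matrix.mul_assoc M P M, ← Matrix.mul_assoc M⁻¹ M (P * M),
      Matrix.nonsing_inv_mul M hMinv, Matrix.one_mul, Matrix.mul_assoc P M M⁻¹,
      Matrix.mul_nonsing_inv M hMinv, Matrix.mul_one]
  intro i j
  rw [hPeq, hΦh]
  simp [hKron, Finset.sum_ite_eq, Finset.sum_ite_eq']
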